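/- arXiv:2202.12417 — 3 statements merged into one kernel-verified Lean document; each statement's English description precedes it below -/
import Mathlib

section
/- Sequential pruning consistency (backward direction): with the setup of the previous statement, define 'meaningless' recursively in descending layer order: no final channel X^{(L)}_j is meaningless; a channel X^{(l)}_i (l < L) is meaningless iff for every output channel j of layer l+1, either A^{(l+1)}_{i,j} = 0 or X^{(l+1)}_j is meaningless. Then for all l and i, r^{(l)}_i = 1 implies X^{(l)}_i is not meaningless. -/
/-- Sequential pruning consistency (backward): active channels are not meaningless. -/
theorem stmt_10 (L : ℕ) (C : Fin (L + 1) → ℕ) (K : Fin L → ℕ)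
    (r : ∀ l, Fin (C l) → ℕ) (hr01 : ∀ l i, r l i = 0 ∨ r l i = 1)
    (hrne : ∀ l, ∃ i, r l i = 1)
    (q : ∀ l : Fin L, Fin (C l.succ) → Fin (K l) → Fin (K l) → ℕ)
    (hq01 : ∀ l j a b, q l j a b = 0 ∨ q l j a b = 1)
    (hshape1 : ∀ (l : Fin L) (j : Fin (C l.succ)), r l.succ j ≤ ∑ a, ∑ b, q l j a b)
    (hshape2 : ∀ (l : Fin L) (j : Fin (C l.succ)) a b, q l j a b ≤ r l.succ j)
    (A : ∀ l : Fin L, Fin (C l.castSucc) → Fin (C l.succ) → Fin (K l) → Fin (K l) → ℕ)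
    (hA : ∀ l i j a b, A l i j a b = r l.castSucc i * q l j a b)
    (ML : ∀ l, Fin (C l) → Prop)
    (hMLlast : ∀ j : Fin (C (Fin.last L)), ¬ ML (Fin.last L) j)
    (hMLrec : ∀ (l : Fin L) (i : Fin (C l.castSucc)),
      ML l.castSucc i ↔ ∀ j : Fin (C l.succ), (∀ a b, A l i j a b = 0) ∨ ML l.succ j) :
    ∀ l i, r l i = 1 → ¬ ML l i := by
  intro l
  induction l using Fin.reverseInduction with
  | last => intro i _; exact hMLlast i
  | cast l ih =>
    intro i h1 hML
    obtain ⟨j, hj⟩ := hrne l.succ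
    rcases (hMLrec l i).mp hML j with h | h
    · have hs := hshape1 l j
      have hq0 : ∀ a b, q l j a b = 0 := by
        intro a b
        have := h a b
        rw [hA, h1, one_mul] at this
        exact this
      simp [hq0, hj] at hs
    · exact ih j hj h
end

section
/- Skip-addition pruning consistency: augment the sequential setting with a set P of skip-addition pairs (s,t) with matching dimensions, where the input activation of layer t satisfies u^{(t)} ≼ v^{(t)} ≼ u^{(t)} + v^{(s)} and 'trivially zero' for the post-addition feature map V^{(t)}_j holds iff both U^{(t)}_j and V^{(s)}_j are trivially zero (and v^{(t)} = u^{(t)} with V^{(t)} = U^{(t)} when t has no incoming skip). Assume ‖u^{(l)}‖₁ ≥ 1 and ‖v^{(l)}‖₁ ≥ 1 for all l, masks A^{(t)}_{i,j,a,b} = v^{(t-1)}_i q^{(t)}_{j,a,b}, and shape constraints u^{(t)}_j ≤ Σ_{a,b} q^{(t)}_{j,a,b}, q^{(t)}_{j,a,b} ≤ u^{(t)}_j. Assume also s < t for all (s,t) ∈ P. Then v^{(l)}_j = 1 implies V^{(l)}_j is not trivially zero, for all l, j. -/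
/-- Skip-addition pruning consistency: active input channels are not trivially zero. -/
theorem stmt_12 (L : ℕ) (C : Fin (L + 1) → ℕ) (K : Fin L → ℕ)
    (u v : ∀ l, Fin (C l) → ℕ)
    (hu01 : ∀ l i, u l i = 0 ∨ u l i = 1) (hv01 : ∀ l i, v l i = 0 ∨ v l i = 1)
    (hune : ∀ l, ∃ i, u l i = 1) (hvne : ∀ l, ∃ i, v l i = 1)
    (q : ∀ l : Fin L, Fin (C l.succ) → Fin (K l) → Fin (K l) → ℕ)
    (hq01 : ∀ l j a b, q l j a b = 0 ∨ q l j a b = 1)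
    (hshape1 : ∀ (l : Fin L) (j : Fin (C l.succ)), u l.succ j ≤ ∑ a, ∑ b, q l j a b)
    (hshape2 : ∀ (l : Fin L) (j : Fin (C l.succ)) a b, q l j a b ≤ u l.succ j)
    (A : ∀ l : Fin L, Fin (C l.castSucc) → Fin (C l.succ) → Fin (K l) → Fin (K l) → ℕ)
    (hA : ∀ l i j a b, A l i j a b = v l.castSucc i * q l j a b)
    (P : Set (Fin (L + 1) × Fin (L + 1)))
    (hPdim : ∀ p ∈ P, C p.1 = C p.2 ∧ p.1.val < p.2.val)
    (TZU TZV : ∀ l, Fin (C l) → Prop)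
    (hTZV0 : ∀ j : Fin (C 0), ¬ TZV 0 j)
    (hTZU : ∀ (l : Fin L) (j : Fin (C l.succ)),
      TZU l.succ j ↔ ∀ i : Fin (C l.castSucc), (∀ a b, A l i j a b = 0) ∨ TZV l.castSucc i)
    (hnoskip : ∀ t : Fin (L + 1), t ≠ 0 → (∀ s, (s, t) ∉ P) →
      (∀ j, v t j = u t j) ∧ (∀ j, TZV t j ↔ TZU t j))
    (hskip : ∀ s t : Fin (L + 1), (s, t) ∈ P → ∀ (hdim : C s = C t),
      (∀ j, u t j ≤ v t j ∧ v t j ≤ u t j + v s (Fin.cast hdim.symm j)) ∧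
      (∀ j, TZV t j ↔ (TZU t j ∧ TZV s (Fin.cast hdim.symm j)))) :
    ∀ l j, v l j = 1 → ¬ TZV l j := by
  suffices H : ∀ n, ∀ l : Fin (L + 1), l.val = n → ∀ j, v l j = 1 → ¬ TZV l j by
    exact fun l j h => H l.val l rfl j h
  intro n
  induction n using Nat.strong_induction_on with
  | _ n ih =>
    intro l hl j hv1 hTZ
    subst hl
    by_cases hl0 : l = 0
    · subst hl0
      exact hTZV0 j hTZ
    · obtain ⟨m, hm⟩ : ∃ m, l.val = m + 1 :=
        ⟨l.val - 1, by have := Fin.pos_of_ne_zero hl0; omega⟩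
      have hmL : m < L := by have := l.isLt; omega
      have hls : (⟨m, hmL⟩ : Fin L).succ = l := Fin.ext (by simp [hm])
      subst hls
      -- key sublemma: active output channel of conv ⇒ not trivially zero U
      have notTZU : ∀ j' : Fin (C (⟨m, hmL⟩ : Fin L).succ), u (⟨m, hmL⟩ : Fin L).succ j' = 1 → ¬ TZU (⟨m, hmL⟩ : Fin L).succ j' := by
        intro j' hu hT
        obtain ⟨i, hvi⟩ := hvne (⟨m, hmL⟩ : Fin L).castSucc
        have hTZVi : ¬ TZV (⟨m, hmL⟩ : Fin L).castSucc i :=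
          ih (⟨m, hmL⟩ : Fin L).castSucc.val (by simp) (⟨m, hmL⟩ : Fin L).castSucc rfl i hvi
        rcases (hTZU (⟨m, hmL⟩ : Fin L) j').mp hT i with hA0 | hTV
        · have h1 : 1 ≤ ∑ a, ∑ b, q (⟨m, hmL⟩ : Fin L) j' a b := hu ▸ hshape1 (⟨m, hmL⟩ : Fin L) j'
          have : ∃ a b, q (⟨m, hmL⟩ : Fin L) j' a b ≠ 0 := by
            by_contra hc
            push_neg at hc
            have : (∑ a, ∑ b, q (⟨m, hmL⟩ : Fin L) j' a b) = 0 :=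
              Finset.sum_eq_zero fun a _ => Finset.sum_eq_zero fun b _ => hc a b
            omega
          obtain ⟨a, b, hab⟩ := this
          have := hA0 a b
          rw [hA (⟨m, hmL⟩ : Fin L) i j' a b, hvi, one_mul] at this
          exact hab this
        · exact hTZVi hTV
      by_cases hs : ∃ s, (s, (⟨m, hmL⟩ : Fin L).succ) ∈ P
      · obtain ⟨s, hsP⟩ := hs
        obtain ⟨hdim, hlt⟩ := hPdim _ hsP
        obtain ⟨hineq, hiff⟩ := hskip s _ hsP hdim
        obtain ⟨hTU, hTVs⟩ := (hiff j).mp hTZ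
        rcases hu01 (⟨m, hmL⟩ : Fin L).succ j with h0 | h1
        · have h2 := (hineq j).2
          rw [hv1, h0] at h2
          have hvs : v s (Fin.cast hdim.symm j) = 1 := by
            rcases hv01 s (Fin.cast hdim.symm j) with h | h <;> omega
          exact ih s.val hlt s rfl _ hvs hTVs
        · exact notTZU j h1 hTU
      · push_neg at hs
        obtain ⟨hveq, hiff⟩ := hnoskip _ hl0 hs
        have hu1 : u (⟨m, hmL⟩ : Fin L).succ j = 1 := (hveq j) ▸ hv1
        exact notTZU j hu1 ((hiff j).mp hTZ)
end

section
/- Skip-addition meaninglessness consistency: in the skip-addition setting with constraints u^{(t)} ≼ v^{(t)}, ‖u^{(l)}‖₁ ≥ 1 for all l, masks A^{(t)}_{i,j,a,b} = v^{(t-1)}_i q^{(t)}_{j,a,b}, and shape constraints u^{(t)}_j ≤ Σ_{a,b} q^{(t)}_{j,a,b}, q^{(t)}_{j,a,b} ≤ u^{(t)}_j, where 'meaningless' is defined by: U^{(L)} channels are never meaningless; V^{(t)}_i is meaningless iff for all j, A^{(t+1)}_{i,j} = 0 or U^{(t+1)}_j is meaningless; and U^{(t)}_i is meaningless iff V^{(t)}_i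 is meaningless — then u^{(l)}_i = 1 implies U^{(l)}_i is not meaningless, for all l, i. -/
/-- Skip-addition meaninglessness consistency: active output channels are not
meaningless. -/
theorem stmt_13 (L : ℕ) (C : Fin (L + 1) → ℕ) (K : Fin L → ℕ)
    (u v : ∀ l, Fin (C l) → ℕ)
    (hu01 : ∀ l i, u l i = 0 ∨ u l i = 1) (hv01 : ∀ l i, v l i = 0 ∨ v l i = 1)
    (huv : ∀ l i, u l i ≤ v l i)
    (hune : ∀ l, ∃ i, u l i = 1)
    (q : ∀ l : Fin L, Fin (C l.succ) → Fin (K l) → Fin (K l) → ℕ)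
    (hq01 : ∀ l j a b, q l j a b = 0 ∨ q l j a b = 1)
    (hshape1 : ∀ (l : Fin L) (j : Fin (C l.succ)), u l.succ j ≤ ∑ a, ∑ b, q l j a b)
    (hshape2 : ∀ (l : Fin L) (j : Fin (C l.succ)) a b, q l j a b ≤ u l.succ j)
    (A : ∀ l : Fin L, Fin (C l.castSucc) → Fin (C l.succ) → Fin (K l) → Fin (K l) → ℕ)
    (hA : ∀ l i j a b, A l i j a b = v l.castSucc i * q l j a b)
    (MLU MLV : ∀ l, Fin (C l) → Prop)
    (hMLUlast : ∀ i : Fin (C (Fin.last L)), ¬ MLU (Fin.last L) i)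
    (hMLV : ∀ (l : Fin L) (i : Fin (C l.castSucc)),
      MLV l.castSucc i ↔ ∀ j : Fin (C l.succ), (∀ a b, A l i j a b = 0) ∨ MLU l.succ j)
    (hMLUV : ∀ (l : Fin L) (i : Fin (C l.castSucc)),
      MLU l.castSucc i ↔ MLV l.castSucc i) :
    ∀ l i, u l i = 1 → ¬ MLU l i := by
  intro l
  induction l using Fin.reverseInduction with
  | last => intro i _; exact hMLUlast i
  | cast l ih =>
    intro i hi hML
    have hMLV' := (hMLV l i).mp ((hMLUV l i).mp hML)
    obtain ⟨j, hj⟩ := hune l.succ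
    rcases hMLV' j with hA0 | hMLj
    · -- ∑ q ≥ 1, so some q entry is 1; then A ≠ 0
      have hsum : 1 ≤ ∑ a, ∑ b, q l j a b := hj ▸ hshape1 l j
      have : ∃ a b, q l j a b ≠ 0 := by
        by_contra h
        push_neg at h
        simp only [h, Finset.sum_const_zero] at hsum; omega
      obtain ⟨a, b, hab⟩ := this
      have hv1 : v l.castSucc i = 1 := by
        rcases hv01 l.castSucc i with h | h
        · have := huv l.castSucc i; omega
        · exact h
      have := hA0 a b
      rw [hA l i j a b, hv1, one_mul] at this
      exact hab this
    · exact ih j hj hMLj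
end
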